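/- arXiv:2312.12279 — 2 statements merged into one kernel-verified Lean document; each statement's English description precedes it below -/
import Mathlib

section
/- Let d ∈ M be ramified over A and let a ∈ A be a ramifier of d over A. Then for every d' ∈ M, d' and d realize the same cut over A if and only if: d' − a ∈ G(d/A), d' − a ∉ H(d/A), and (a < d' ↔ a < d). In other words, the cut of d over A is the connected component of (a + G(d/A)) ∖ (a + H(d/A)) containing d. -/
/-- `c` and `d` realize the same cut over the subgroup `A`. -/
def SameCut {M : Type*} [AddCommGroup M] [LinearOrder M] [IsOrderedAddMonoid M] (A : AddSubgroup M) (c d : M) : Prop :=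
  ∀ a ∈ A, ((a ≤ c ↔ a ≤ d) ∧ (c ≤ a ↔ d ≤ a))

/-- `Stab(d/A)`: elements `a ∈ A` such that `d + a` and `d` realize the same cut over `A`. -/
def Stab {M : Type*} [AddCommGroup M] [LinearOrder M] [IsOrderedAddMonoid M] (A : AddSubgroup M) (d : M) : Set M :=
  {a | a ∈ A ∧ SameCut A (d + a) d}

open Classical in
/-- `G(d/A)`. -/
def Gset {M : Type*} [AddCommGroup M] [LinearOrder M] [IsOrderedAddMonoid M] (A : AddSubgroup M) (d : M) : Set M :=
  if d ∈ A then ({0} : Set M)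
  else {x | ∀ a ∈ A, a ∉ Stab A d → (-|a| < x ∧ x < |a|)}

/-- `H(d/A)`. -/
def Hset {M : Type*} [AddCommGroup M] [LinearOrder M] [IsOrderedAddMonoid M] (A : AddSubgroup M) (d : M) : Set M :=
  {x | ∃ a ∈ Stab A d, |x| ≤ |a|}

/-- `Δ(x) ≤ Δ(y)`: `|x| ≤ n • |y|` for some natural number `n`. -/
def DeltaLe {M : Type*} [AddCommGroup M] [LinearOrder M] [IsOrderedAddMonoid M] (x y : M) : Prop :=
  ∃ n : ℕ, |x| ≤ n • |y|

/-- `Δ(x) = Δ(y)`. -/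
def DeltaEq {M : Type*} [AddCommGroup M] [LinearOrder M] [IsOrderedAddMonoid M] (x y : M) : Prop :=
  DeltaLe x y ∧ DeltaLe y x

/-- `Δ(x) < Δ(y)`. -/
def DeltaLt {M : Type*} [AddCommGroup M] [LinearOrder M] [IsOrderedAddMonoid M] (x y : M) : Prop :=
  DeltaLe x y ∧ ¬ DeltaLe y x

/-- `Δ(x) ∈ Δ(A)`. -/
def DeltaMem {M : Type*} [AddCommGroup M] [LinearOrder M] [IsOrderedAddMonoid M] (x : M) (A : AddSubgroup M) : Prop :=
  ∃ a ∈ A, DeltaEq x a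

/-- `a` is a ramifier of `d` over `A`: `a ∈ A` and `Δ(d − a) ∉ Δ(A)`. -/
def IsRamifier {M : Type*} [AddCommGroup M] [LinearOrder M] [IsOrderedAddMonoid M] (A : AddSubgroup M) (d a : M) : Prop :=
  a ∈ A ∧ ¬ DeltaMem (d - a) A

/-- `d` is ramified over `A` if it admits a ramifier. -/
def Ramified {M : Type*} [AddCommGroup M] [LinearOrder M] [IsOrderedAddMonoid M] (A : AddSubgroup M) (d : M) : Prop :=
  ∃ a, IsRamifier A d a

/-- `d` is cut-independent from `B` over `A`: every closed interval with bounds in `B`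
containing `d` contains a point of `A`. -/
def CutIndep {M : Type*} [AddCommGroup M] [LinearOrder M] [IsOrderedAddMonoid M] (A B : AddSubgroup M) (d : M) : Prop :=
  ∀ b₁ ∈ B, ∀ b₂ ∈ B, b₁ ≤ d → d ≤ b₂ → ∃ a ∈ A, b₁ ≤ a ∧ a ≤ b₂

section Aux
variable {M : Type*} [AddCommGroup M] [LinearOrder M] [IsOrderedAddMonoid M] {A : AddSubgroup M} {d a : M}

lemma aux_dichotomy (hram : ¬ DeltaMem (d - a) A) {c : M} (hc : c ∈ A) :
    (∀ n : ℕ, n • |c| < |d - a|) ∨ (∀ n : ℕ, n • |d - a| < |c|) := by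
  by_cases h : DeltaLe (d - a) c
  · right; intro n; by_contra hn; push_neg at hn
    exact hram ⟨c, hc, h, n, hn⟩
  · left; intro n; by_contra hn; push_neg at hn
    exact h ⟨n, hn⟩

lemma aux_e_ne (hram : ¬ DeltaMem (d - a) A) : d - a ≠ 0 := by
  intro h
  exact hram ⟨0, A.zero_mem, by rw [h]; exact ⟨⟨0, by simp⟩, ⟨0, by simp⟩⟩⟩

lemma aux_abs_mem {s : M} (hs : s ∈ A) : |s| ∈ A := by
  rcases abs_choice s with h | h <;> rw [h]
  · exact hs
  · exact A.neg_mem hs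

lemma sameCut_iff_sub (ha : a ∈ A) (d' : M) :
    SameCut A d' d ↔
      ∀ c ∈ A, ((c ≤ d' - a ↔ c ≤ d - a) ∧ (d' - a ≤ c ↔ d - a ≤ c)) := by
  constructor
  · intro h c hc
    obtain ⟨h1, h2⟩ := h (a + c) (A.add_mem ha hc)
    constructor
    · rw [le_sub_iff_add_le, le_sub_iff_add_le, add_comm c a]; exact h1
    · rw [sub_le_iff_le_add, sub_le_iff_le_add, add_comm c a]; exact h2
  · intro h b hb
    obtain ⟨h1, h2⟩ := h (b - a) (A.sub_mem hb ha)
    simp only [sub_le_sub_iff_right] at h1 h2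
    exact ⟨h1, h2⟩

lemma stab_neg {s : M} (hs : s ∈ Stab A d) : -s ∈ Stab A d := by
  obtain ⟨hsA, hsc⟩ := hs
  refine ⟨A.neg_mem hsA, fun b hb => ?_⟩
  obtain ⟨h1, h2⟩ := hsc (b + s) (A.add_mem hb hsA)
  constructor
  · rw [← sub_eq_add_neg, le_sub_iff_add_le, ← h1, add_le_add_iff_right]
  · rw [← sub_eq_add_neg, sub_le_iff_le_add, ← h2, add_le_add_iff_right]

lemma aux_small_pair {x y e : M} (hx : ∀ n : ℕ, n • |x| < |e|) (hy : ∀ n : ℕ, n • |y| < |e|) :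
    |x| + |y| < |e| := by
  rcases le_total |x| |y| with h | h
  · calc |x| + |y| ≤ |y| + |y| := add_le_add_left h _
      _ = 2 • |y| := (two_nsmul _).symm
      _ < |e| := hy 2
  · calc |x| + |y| ≤ |x| + |x| := add_le_add_right h _
      _ = 2 • |x| := (two_nsmul _).symm
      _ < |e| := hx 2

lemma aux_cut_pair {e e' c : M} (he : e ≠ 0) (hsign : 0 < e' ↔ 0 < e)
    (h1 : |c| < |e|) (h2 : |c| < |e'|) :
    (c ≤ e' ↔ c ≤ e) ∧ (e' ≤ c ↔ e ≤ c) := by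
  rcases he.lt_or_gt with hneg | hpos
  · have he'0 : e' ≠ 0 := by
      intro h0; rw [h0, abs_zero] at h2; exact (abs_nonneg c).not_gt h2
    have hne' : e' < 0 := by
      rcases he'0.lt_or_gt with h | h
      · exact h
      · exact absurd (hsign.mp h) (not_lt.mpr hneg.le)
    have hce : e < c := lt_of_lt_of_le (lt_neg.mpr (by rwa [abs_of_neg hneg] at h1)) (neg_abs_le c)
    have hce' : e' < c := lt_of_lt_of_le (lt_neg.mpr (by rwa [abs_of_neg hne'] at h2)) (neg_abs_le c)
    exact ⟨iff_of_false (not_le.mpr hce') (not_le.mpr hce), iff_of_true hce'.le hce.le⟩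
  · have hpe' : 0 < e' := hsign.mpr hpos
    have hce : c < e := lt_of_le_of_lt (le_abs_self c) (by rwa [abs_of_pos hpos] at h1)
    have hce' : c < e' := lt_of_le_of_lt (le_abs_self c) (by rwa [abs_of_pos hpe'] at h2)
    exact ⟨iff_of_true hce'.le hce.le, iff_of_false (not_le.mpr hce') (not_le.mpr hce)⟩

lemma aux_cut_pair_big {e e' c : M} (h1 : |e| < |c|) (h2 : |e'| < |c|) :
    (c ≤ e' ↔ c ≤ e) ∧ (e' ≤ c ↔ e ≤ c) := by
  have hc : c ≠ 0 := by
    intro h; rw [h, abs_zero] at h1; exact (abs_nonneg e).not_gt h1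
  rcases hc.lt_or_gt with hneg | hpos
  · have hce : c < e := lt_of_lt_of_le (lt_neg.mpr (by rwa [abs_of_neg hneg] at h1)) (neg_abs_le e)
    have hce' : c < e' := lt_of_lt_of_le (lt_neg.mpr (by rwa [abs_of_neg hneg] at h2)) (neg_abs_le e')
    exact ⟨iff_of_true hce'.le hce.le, iff_of_false (not_le.mpr hce') (not_le.mpr hce)⟩
  · have hce : e < c := lt_of_le_of_lt (le_abs_self e) (by rwa [abs_of_pos hpos] at h1)
    have hce' : e' < c := lt_of_le_of_lt (le_abs_self e') (by rwa [abs_of_pos hpos] at h2)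
    exact ⟨iff_of_false (not_le.mpr hce') (not_le.mpr hce), iff_of_true hce'.le hce.le⟩

end Aux

section Stab
variable {M : Type*} [AddCommGroup M] [LinearOrder M] [IsOrderedAddMonoid M] {A : AddSubgroup M} {d a : M}

lemma aux_stab_iff (ha : a ∈ A) (hram : ¬ DeltaMem (d - a) A) {s : M} :
    s ∈ Stab A d ↔ s ∈ A ∧ ∀ n : ℕ, n • |s| < |d - a| := by
  constructor
  · intro hs
    have hsA := hs.1
    refine ⟨hsA, ?_⟩
    rcases aux_dichotomy hram hsA with h | h
    · exact h
    · exfalso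
      have hes : |d - a| < |s| := by simpa using h 1
      -- replace s by t = |s| ∈ Stab
      have ht : |s| ∈ Stab A d := by
        rcases abs_choice s with hh | hh <;> rw [hh]
        · exact hs
        · exact stab_neg hs
      obtain ⟨htA, htc⟩ := ht
      set c : M := if 0 ≤ d - a then |s| else 0 with hcdef
      have hcA : c ∈ A := by
        rw [hcdef]; split
        · exact htA
        · exact A.zero_mem
      have h1 : d - a < c := by
        rw [hcdef]; split
        · exact lt_of_le_of_lt (le_abs_self _) hes
        · exact lt_of_not_ge (by assumption)
      have h2 : c ≤ (d - a) + |s| := by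
        rw [hcdef]; split
        · exact le_add_of_nonneg_left (by assumption)
        · have hlt : -|s| < d - a := lt_of_lt_of_le (neg_lt_neg hes) (neg_abs_le _)
          exact le_of_lt (neg_lt_iff_pos_add.mp hlt)
      have k := (sameCut_iff_sub ha (d + |s|)).mp htc c hcA
      rw [add_sub_right_comm] at k
      exact absurd (k.1.mp h2) (not_le.mpr h1)
  · rintro ⟨hsA, hsmall⟩
    refine ⟨hsA, (sameCut_iff_sub ha (d + s)).mpr ?_⟩
    intro c hc
    rw [add_sub_right_comm]
    have he : d - a ≠ 0 := aux_e_ne hram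
    have hse : |s| < |d - a| := by simpa using hsmall 1
    have habs : |d - a| ≤ |d - a + s| + |s| := by
      have h := abs_add_le (d - a + s) (-s)
      rwa [add_neg_cancel_right, abs_neg] at h
    have hsign : 0 < d - a + s ↔ 0 < d - a := by
      rcases he.lt_or_gt with hn | hp
      · refine iff_of_false (not_lt.mpr ?_) (not_lt.mpr hn.le)
        have t1 : d - a + s ≤ d - a + |s| := add_le_add_right (le_abs_self s) _
        have t2 : d - a + |s| < d - a + -(d - a) := by
          apply add_lt_add_right
          rwa [abs_of_neg hn] at hse
        rw [add_neg_cancel] at t2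
        exact (t1.trans_lt t2).le
      · refine iff_of_true ?_ hp
        have t1 : d - a + -|s| ≤ d - a + s := add_le_add_right (neg_abs_le s) _
        have t2 : 0 < d - a + -|s| := by
          rw [← sub_eq_add_neg, sub_pos]
          rwa [abs_of_pos hp] at hse
        exact t2.trans_le t1
    rcases aux_dichotomy hram hc with hsm | hbg
    · have hc1 : |c| < |d - a| := by simpa using hsm 1
      have hc2 : |c| < |d - a + s| := by
        have := (aux_small_pair hsm hsmall).trans_le habs
        exact lt_of_add_lt_add_right this
      exact aux_cut_pair he hsign hc1 hc2
    · have hb1 : |d - a| < |c| := by simpa using hbg 1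
      have hb2 : |d - a + s| < |c| := by
        calc |d - a + s| ≤ |d - a| + |s| := abs_add_le _ _
          _ < |d - a| + |d - a| := add_lt_add_right hse _
          _ = 2 • |d - a| := (two_nsmul _).symm
          _ < |c| := hbg 2
      exact aux_cut_pair_big hb1 hb2

end Stab

/-- If `d` is ramified over `A` with ramifier `a`, then the cut of `d` over `A` is the
connected component of `(a + G(d/A)) ∖ (a + H(d/A))` containing `d`: for every `d'`,
`d'` and `d` realize the same cut over `A` iff `d' − a ∈ G(d/A)`, `d' − a ∉ H(d/A)`,
and `d'` lies on the same side of `a` as `d`. -/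
theorem sameCut_iff_of_ramified (M : Type*) [AddCommGroup M] [LinearOrder M] [IsOrderedAddMonoid M]
    (hMdiv : ∀ x : M, ∀ n : ℕ, 0 < n → ∃ y : M, n • y = x)
    (A : AddSubgroup M)
    (hAdiv : ∀ a ∈ A, ∀ n : ℕ, 0 < n → ∃ b ∈ A, n • b = a)
    (d a : M) (hram : IsRamifier A d a) :
    ∀ d' : M, SameCut A d' d ↔
      (d' - a ∈ Gset A d ∧ d' - a ∉ Hset A d ∧ (a < d' ↔ a < d)) := by
  obtain ⟨ha, hram⟩ := hram
  have he : d - a ≠ 0 := aux_e_ne hram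
  have hdA : d ∉ A := by
    intro hd
    exact hram ⟨d - a, A.sub_mem hd ha, ⟨1, by simp⟩, ⟨1, by simp⟩⟩
  intro d'
  constructor
  · intro hsc
    have key := (sameCut_iff_sub ha d').mp hsc
    have k0 := key 0 A.zero_mem
    have hsign' : (0 < d' - a ↔ 0 < d - a) := by
      rw [← not_le, ← not_le, k0.2]
    have he'0 : d' - a ≠ 0 := by
      intro h0
      rw [h0] at k0
      exact he (le_antisymm (k0.2.mp le_rfl) (k0.1.mp le_rfl))
    refine ⟨?_, ?_, ?_⟩
    · -- Gset
      simp only [Gset, if_neg hdA, Set.mem_setOf_eq]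
      intro b hb hbstab
      rcases aux_dichotomy hram hb with hsm | hbg
      · exact absurd ((aux_stab_iff ha hram).mpr ⟨hb, hsm⟩) hbstab
      · rw [← abs_lt]
        by_contra hcon; push_neg at hcon
        have hbe : |d - a| < |b| := by simpa using hbg 1
        have hbA' : |b| ∈ A := aux_abs_mem hb
        rcases he.lt_or_gt with hn | hp
        · have he'n : d' - a < 0 := by
            rcases he'0.lt_or_gt with h | h
            · exact h
            · exact absurd (hsign'.mp h) (not_lt.mpr hn.le)
          have h1 : d' - a ≤ -|b| := by
            rw [le_neg]; rwa [abs_of_neg he'n] at hcon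
          have h2 : -|b| < d - a := lt_of_lt_of_le (neg_lt_neg hbe) (neg_abs_le _)
          exact absurd ((key _ (A.neg_mem hbA')).2.mp h1) (not_le.mpr h2)
        · have he'p : 0 < d' - a := hsign'.mpr hp
          have h1 : |b| ≤ d' - a := by rwa [abs_of_pos he'p] at hcon
          have h2 : d - a < |b| := lt_of_le_of_lt (le_abs_self _) hbe
          exact absurd ((key _ hbA').1.mp h1) (not_le.mpr h2)
    · -- Hset
      rintro ⟨s, hsStab, hle⟩
      obtain ⟨hsA, hsmall⟩ := (aux_stab_iff ha hram).mp hsStab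
      have hs2 : |s| + |s| < |d - a| := by
        have := hsmall 2; rwa [two_nsmul] at this
      have h2A : |s| + |s| ∈ A := A.add_mem (aux_abs_mem hsA) (aux_abs_mem hsA)
      have hspos : 0 < |s| := lt_of_lt_of_le (abs_pos.mpr he'0) hle
      rcases he.lt_or_gt with hn | hp
      · have he'n : d' - a < 0 := by
          rcases he'0.lt_or_gt with h | h
          · exact h
          · exact absurd (hsign'.mp h) (not_lt.mpr hn.le)
        have hA1 : d - a ≤ -(|s| + |s|) := by
          rw [le_neg]; rw [abs_of_neg hn] at hs2; exact hs2.le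
        have hlt : -(|s| + |s|) < d' - a := by
          have t1 : -|s| ≤ d' - a := (neg_le_neg hle).trans (neg_abs_le _)
          have t2 : -(|s| + |s|) < -|s| := neg_lt_neg (lt_add_of_pos_right _ hspos)
          exact t2.trans_le t1
        exact absurd ((key _ (A.neg_mem h2A)).2.mpr hA1) (not_le.mpr hlt)
      · have hA1 : |s| + |s| ≤ d - a := by
          rw [abs_of_pos hp] at hs2; exact hs2.le
        have hlt : d' - a < |s| + |s| :=
          lt_of_le_of_lt ((le_abs_self _).trans hle) (lt_add_of_pos_right _ hspos)
        exact absurd ((key _ h2A).1.mpr hA1) (not_le.mpr hlt)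
    · -- sign
      rw [← sub_pos, ← sub_pos (a := d)]
      exact hsign'
  · rintro ⟨hG, hH, hsgn⟩
    have hsign' : 0 < d' - a ↔ 0 < d - a := by
      rw [sub_pos, sub_pos]; exact hsgn
    have he'0 : d' - a ≠ 0 := by
      rintro h0
      refine hH ⟨0, (aux_stab_iff ha hram).mpr ⟨A.zero_mem, fun n => by
        simpa using abs_pos.mpr he⟩, by simp [h0]⟩
    simp only [Gset, if_neg hdA, Set.mem_setOf_eq] at hG
    rw [sameCut_iff_sub ha]
    intro c hc
    rcases aux_dichotomy hram hc with hsm | hbg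
    · have hcStab : c ∈ Stab A d := (aux_stab_iff ha hram).mpr ⟨hc, hsm⟩
      have h2 : |c| < |d' - a| := by
        by_contra hcon; push_neg at hcon
        exact hH ⟨c, hcStab, hcon⟩
      exact aux_cut_pair he hsign' (by simpa using hsm 1) h2
    · have hcn : c ∉ Stab A d := by
        intro hcS
        obtain ⟨_, hsm⟩ := (aux_stab_iff ha hram).mp hcS
        have t1 : |c| < |d - a| := by simpa using hsm 1
        have t2 : |d - a| < |c| := by simpa using hbg 1
        exact absurd t1 (not_lt.mpr t2.le)
      have h2 : |d' - a| < |c| := abs_lt.mpr (hG c hc hcn)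
      exact aux_cut_pair_big (by simpa using hbg 1) h2
end

section
/- Let d₁, d₂ ∈ M be ramified over A, with ramifiers a₁ and a₂ respectively, such that G(d₁/A) = G(d₂/A) and Δ(d₁ − a₁) < Δ(d₂ − a₂). Then d₁ + d₂ is ramified over A, a₁ + a₂ is a ramifier of d₁ + d₂ over A, Δ((d₁ + d₂) − (a₁ + a₂)) = Δ(d₂ − a₂), and Stab(d₁ + d₂/A) = Stab(d₂/A) (hence G(d₁ + d₂/A) = G(d₂/A)). -/
section Aux
variable {M : Type*} [AddCommGroup M] [LinearOrder M] [IsOrderedAddMonoid M] {A : AddSubgroup M}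

lemma deltaLe_trans' {x y z : M} (h1 : DeltaLe x y) (h2 : DeltaLe y z) : DeltaLe x z := by
  obtain ⟨n, hn⟩ := h1; obtain ⟨m, hm⟩ := h2
  refine ⟨n * m, hn.trans ?_⟩
  rw [mul_smul]
  exact nsmul_le_nsmul_right hm n

lemma deltaLe_total' (x y : M) : DeltaLe x y ∨ DeltaLe y x := by
  rcases le_total |x| |y| with h | h
  · exact Or.inl ⟨1, by simpa using h⟩
  · exact Or.inr ⟨1, by simpa using h⟩

lemma deltaLt_add' {x y : M} (h : DeltaLt x y) : DeltaEq (x + y) y := by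
  obtain ⟨-, h2⟩ := h
  have h2x : |x| + |x| ≤ |y| := by
    have := le_of_not_gt fun hlt => h2 ⟨2, le_of_lt hlt⟩
    rwa [two_nsmul] at this
  have hx_le : |x| ≤ |y| := le_trans (le_add_of_nonneg_left (abs_nonneg x)) h2x
  have hyx : |y| ≤ |x + y| + |x| := by
    have he : x + y + -x = y := by abel
    calc |y| = |x + y + (-x)| := by rw [he]
      _ ≤ |x + y| + |-x| := abs_add_le _ _
      _ = |x + y| + |x| := by rw [abs_neg]
  constructor
  · exact ⟨2, by rw [two_nsmul]; exact (abs_add_le x y).trans (add_le_add_left hx_le _)⟩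
  · refine ⟨2, ?_⟩
    rw [two_nsmul]
    have hxle : |x| ≤ |x + y| :=
      le_of_add_le_add_right (h2x.trans hyx)
    exact hyx.trans (add_le_add_right hxle _)
end Aux

section Aux2
variable {M : Type*} [AddCommGroup M] [LinearOrder M] [IsOrderedAddMonoid M] {A : AddSubgroup M}

lemma sameCut_refl' (c : M) : SameCut A c c := fun _ _ => ⟨Iff.rfl, Iff.rfl⟩

lemma sameCut_symm' {c d : M} (h : SameCut A c d) : SameCut A d c :=
  fun a ha => ⟨(h a ha).1.symm, (h a ha).2.symm⟩

lemma sameCut_trans' {c d e : M} (h1 : SameCut A c d) (h2 : SameCut A d e) : SameCut A c e :=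
  fun a ha => ⟨(h1 a ha).1.trans (h2 a ha).1, (h1 a ha).2.trans (h2 a ha).2⟩

lemma sameCut_translate' {c d : M} (h : SameCut A c d) {b : M} (hb : b ∈ A) :
    SameCut A (c + b) (d + b) := by
  intro a ha
  have h' := h (a - b) (A.sub_mem ha hb)
  constructor
  · rw [← sub_le_iff_le_add, ← sub_le_iff_le_add]
    exact h'.1
  · rw [← le_sub_iff_add_le, ← le_sub_iff_add_le]
    exact h'.2

lemma sameCut_nsmul' {d b : M} (hb : b ∈ A) (h : SameCut A (d + b) d) (k : ℕ) :
    SameCut A (d + k • b) d := by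
  induction k with
  | zero => simpa using sameCut_refl' (A := A) d
  | succ k ih =>
    have h1 : SameCut A (d + b + k • b) (d + k • b) := sameCut_translate' h (A.nsmul_mem hb k)
    have he : d + (k + 1) • b = d + b + k • b := by rw [succ_nsmul]; abel
    rw [he]
    exact sameCut_trans' h1 ih

lemma not_mem_of_ramifier' {d a : M} (h : IsRamifier A d a) : d ∉ A := fun hd =>
  h.2 ⟨d - a, A.sub_mem hd h.1, ⟨1, by simp⟩, ⟨1, by simp⟩⟩

lemma stab_eq_of_ramifier' {d a : M} (h : IsRamifier A d a) :
    Stab A d = {b | b ∈ A ∧ DeltaLt b (d - a)} := by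
  obtain ⟨haA, hmem⟩ := h
  ext b
  simp only [Stab, Set.mem_setOf_eq]
  constructor
  · rintro ⟨hbA, hcut⟩
    refine ⟨hbA, ?_⟩
    have key : ¬ DeltaLe (d - a) b := by
      rintro ⟨n, hn⟩
      -- c = |b|, c ∈ A, SameCut A (d + c) d
      set c : M := |b| with hc
      have hcA : c ∈ A := by
        rcases le_total 0 b with hb0 | hb0
        · rw [hc, abs_of_nonneg hb0]; exact hbA
        · rw [hc, abs_of_nonpos hb0]; exact A.neg_mem hbA
      have hscc : SameCut A (d + c) d := by
        rcases le_total 0 b with hb0 | hb0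
        · rw [hc, abs_of_nonneg hb0]; exact hcut
        · rw [hc, abs_of_nonpos hb0]
          have := sameCut_translate' hcut (A.neg_mem hbA)
          have he : d + b + -b = d := by abel
          rw [he] at this
          exact sameCut_symm' this
      rw [hc] at hn
      -- d ≤ a + n•c and a ≤ d + n•c
      have hd_le : d ≤ a + n • c := by
        have h1 : d - a ≤ n • c := (le_abs_self _).trans hn
        calc d = a + (d - a) := by abel
          _ ≤ a + n • c := add_le_add_right h1 a
      have ha_le : a ≤ d + n • c := by
        have h1 : a - d ≤ n • c := by
          have := (le_abs_self (a - d)).trans_eq (abs_sub_comm a d)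
          exact this.trans hn
        calc a = d + (a - d) := by abel
          _ ≤ d + n • c := add_le_add_right h1 d
      -- same cut gives d + (2n+1)•c ≤ a + n•c
      have hsc := sameCut_nsmul' hcA hscc (2 * n + 1)
      have ha' : a + n • c ∈ A := A.add_mem haA (A.nsmul_mem hcA n)
      have h2 : d + (2 * n + 1) • c ≤ a + n • c := ((hsc _ ha').2).mpr hd_le
      have hKe : (2 * n + 1) • c = n • c + n • c + c := by
        rw [add_nsmul, two_mul, add_nsmul, one_nsmul]
      have h3 : d + (n • c + n • c + c) ≤ d + (n • c + n • c) := by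
        calc d + (n • c + n • c + c) = d + (2 * n + 1) • c := by rw [hKe]
          _ ≤ a + n • c := h2
          _ ≤ d + n • c + n • c := add_le_add_left ha_le _
          _ = d + (n • c + n • c) := by abel
      have hc0 : c ≤ 0 := (add_le_iff_nonpos_right _).mp (le_of_add_le_add_left h3)
      -- but then b = 0, so d = a, contradicting hmem
      have hb0 : b = 0 := abs_eq_zero.mp (le_antisymm hc0 (abs_nonneg b))
      rw [hb0] at hn
      simp only [abs_zero, smul_zero] at hn
      have hda : d - a = 0 := abs_eq_zero.mp (le_antisymm hn (abs_nonneg _))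
      exact hmem ⟨0, A.zero_mem, ⟨1, by simp [hda]⟩, ⟨1, by simp [hda]⟩⟩
    rcases deltaLe_total' b (d - a) with h' | h'
    · exact ⟨h', key⟩
    · exact absurd h' key
  · rintro ⟨hbA, hlt⟩
    refine ⟨hbA, ?_⟩
    have claim : ∀ a' ∈ A, |d - a'| ≤ |b| → False := by
      intro a' ha' habs
      apply hmem
      refine ⟨a' - a, A.sub_mem ha' haA, ?_⟩
      have hx : DeltaLe (d - a') b := ⟨1, by simpa using habs⟩
      have hny : ¬ DeltaLe (a' - a) (d - a') := by
        rintro ⟨m, hm⟩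
        apply hlt.2
        have hsum : DeltaLe (d - a) (d - a') := by
          refine ⟨m + 1, ?_⟩
          have he : d - a = (d - a') + (a' - a) := by abel
          rw [he, add_nsmul, one_nsmul, add_comm (m • |d - a'|)]
          exact (abs_add_le _ _).trans (add_le_add_right hm _)
        exact deltaLe_trans' hsum hx
      have hlt' : DeltaLt (d - a') (a' - a) := by
        rcases deltaLe_total' (d - a') (a' - a) with h' | h'
        · exact ⟨h', hny⟩
        · exact absurd h' hny
      have heq2 := deltaLt_add' hlt'
      have he : (d - a') + (a' - a) = d - a := by abel
      rwa [he] at heq2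
    intro a' ha'
    have hb1 : -|b| ≤ -b := neg_le_neg (le_abs_self b)
    have hb2 : -b ≤ |b| := neg_le_abs b
    have H1 : ∀ u v w : M, u ≤ v + w → -w ≤ v - u := by
      intro u v w h; rw [neg_le_sub_iff_le_add]; exact h
    have H2 : ∀ u v w : M, v + w ≤ u → v - u ≤ -w := by
      intro u v w h
      rw [sub_le_iff_le_add, ← sub_le_iff_le_add', sub_neg_eq_add]
      exact h
    constructor
    · constructor <;> intro h <;> by_contra hcon <;> push_neg at hcon
      · exact claim a' ha' (abs_le.2 ⟨hb1.trans (H1 a' d b h),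
          (sub_nonpos.2 hcon.le).trans (abs_nonneg b)⟩)
      · exact claim a' ha' (abs_le.2 ⟨(neg_nonpos_of_nonneg (abs_nonneg b)).trans
          (sub_nonneg.2 h), (H2 a' d b hcon.le).trans hb2⟩)
    · constructor <;> intro h <;> by_contra hcon <;> push_neg at hcon
      · exact claim a' ha' (abs_le.2 ⟨(neg_nonpos_of_nonneg (abs_nonneg b)).trans
          (sub_nonneg.2 hcon.le), (H2 a' d b h).trans hb2⟩)
      · exact claim a' ha' (abs_le.2 ⟨hb1.trans (H1 a' d b hcon.le),
          (sub_nonpos.2 h).trans (abs_nonneg b)⟩)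
end Aux2

/-- If `d₁, d₂` are ramified over `A` with ramifiers `a₁, a₂`, `G(d₁/A) = G(d₂/A)`, and
`Δ(d₁ − a₁) < Δ(d₂ − a₂)`, then `d₁ + d₂` is ramified over `A` with ramifier `a₁ + a₂`,
`Δ((d₁ + d₂) − (a₁ + a₂)) = Δ(d₂ − a₂)`, and `Stab(d₁ + d₂/A) = Stab(d₂/A)`,
hence `G(d₁ + d₂/A) = G(d₂/A)`. -/
theorem ramified_add_ramified (M : Type*) [AddCommGroup M] [LinearOrder M] [IsOrderedAddMonoid M]
    (hMdiv : ∀ x : M, ∀ n : ℕ, 0 < n → ∃ y : M, n • y = x)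
    (A : AddSubgroup M)
    (hAdiv : ∀ a ∈ A, ∀ n : ℕ, 0 < n → ∃ b ∈ A, n • b = a)
    (d₁ d₂ a₁ a₂ : M)
    (h₁ : IsRamifier A d₁ a₁) (h₂ : IsRamifier A d₂ a₂)
    (hG : Gset A d₁ = Gset A d₂)
    (hδ : DeltaLt (d₁ - a₁) (d₂ - a₂)) :
    Ramified A (d₁ + d₂) ∧
    IsRamifier A (d₁ + d₂) (a₁ + a₂) ∧
    DeltaEq ((d₁ + d₂) - (a₁ + a₂)) (d₂ - a₂) ∧
    Stab A (d₁ + d₂) = Stab A d₂ ∧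
    Gset A (d₁ + d₂) = Gset A d₂ := by
  have heq : DeltaEq ((d₁ + d₂) - (a₁ + a₂)) (d₂ - a₂) := by
    have he : (d₁ + d₂) - (a₁ + a₂) = (d₁ - a₁) + (d₂ - a₂) := by abel
    rw [he]
    exact deltaLt_add' hδ
  have hram : IsRamifier A (d₁ + d₂) (a₁ + a₂) := by
    refine ⟨A.add_mem h₁.1 h₂.1, ?_⟩
    rintro ⟨c, hc, hde⟩
    exact h₂.2 ⟨c, hc, deltaLe_trans' heq.2 hde.1, deltaLe_trans' hde.2 heq.1⟩
  have hstab : Stab A (d₁ + d₂) = Stab A d₂ := by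
    rw [stab_eq_of_ramifier' hram, stab_eq_of_ramifier' h₂]
    ext b
    simp only [Set.mem_setOf_eq]
    constructor
    · rintro ⟨hb, hb1, hb2⟩
      exact ⟨hb, deltaLe_trans' hb1 heq.1, fun hcon => hb2 (deltaLe_trans' heq.1 hcon)⟩
    · rintro ⟨hb, hb1, hb2⟩
      exact ⟨hb, deltaLe_trans' hb1 heq.2, fun hcon => hb2 (deltaLe_trans' heq.2 hcon)⟩
  have hGs : Gset A (d₁ + d₂) = Gset A d₂ := by
    simp only [Gset]
    rw [if_neg (not_mem_of_ramifier' hram), if_neg (not_mem_of_ramifier' h₂), hstab]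
  exact ⟨⟨a₁ + a₂, hram⟩, hram, heq, hstab, hGs⟩
end
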